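/- Martingale increment bounds: Let k ≥ 1 and X be a k-homogeneous point process on {1,…,m} that is ℓ∞-independent with parameter d_inf, with density ν_X(i) = Pr(i ∈ X)/k. Let Y_1,…,Y_m be d×d Hermitian with 0 ⪯ Y_i ⪯ rI, let e satisfy Pr(e ∈ X) > 0, and set Z_e = E_{X_e}[Y_e + Σ_{i∈X_e} Y_i] − E_X[Σ_{i∈X} Y_i]. Then: (i) |Z_e| ⪯ r·d_inf·I, where |·| is the matrix absolute value; and (ii) E_{e∼ν_X}[Z_e²] ⪯ r·d_inf²·E_{e∼ν_X}[Y_e]. -/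

import Mathlib

open Matrix Finset
open scoped Classical ComplexOrder

/-- Intensity of a point process: `ρ_X(i) = Pr(i ∈ X)`. -/
noncomputable def intensity {α : Type*} [Fintype α] [DecidableEq α]
    (μ : Finset α → ℝ) (i : α) : ℝ :=
  ∑ F ∈ Finset.univ.filter (fun F => i ∈ F), μ F

/-- Normalizing constant of the reduced process `X_{A1}^{A0}`. -/
noncomputable def redNorm {α : Type*} [Fintype α] [DecidableEq α]
    (μ : Finset α → ℝ) (A0 A1 : Finset α) : ℝ :=
  ∑ B ∈ Finset.univ.filter (fun B => Disjoint B (A0 ∪ A1)), μ (A1 ∪ B)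

/-- The reduced process `X_{A1}^{A0}` obtained from `μ` by excluding `A0` and
including `A1`: its law on subsets `B` of the complement of `A0 ∪ A1` is
proportional to `μ (A1 ∪ B)`. -/
noncomputable def reduced {α : Type*} [Fintype α] [DecidableEq α]
    (μ : Finset α → ℝ) (A0 A1 : Finset α) : Finset α → ℝ :=
  fun B => if Disjoint B (A0 ∪ A1) then μ (A1 ∪ B) / redNorm μ A0 A1 else 0

/-- `δ_{X,e}(i) = 1 - ρ_X(e)` if `i = e`, and `ρ_{X_e}(i) - ρ_X(i)` otherwise. -/
noncomputable def deltaPP {α : Type*} [Fintype α] [DecidableEq α]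
    (μ : Finset α → ℝ) (e i : α) : ℝ :=
  if i = e then 1 - intensity μ e else intensity (reduced μ ∅ {e}) i - intensity μ i

/-- A point process is `k`-homogeneous if all its samples have cardinality `k`. -/
def IsHomogeneous {α : Type*} (μ : Finset α → ℝ) (k : ℕ) : Prop :=
  ∀ F, μ F ≠ 0 → F.card = k

/-- `ℓ∞`-independence with parameter `dinf`: for all disjoint `A0, A1` such that the
reduced process `Y = X_{A1}^{A0}` exists, and all `e` in the support of the intensity
of `Y`, the total variation `∑_{i ∈ supp ρ_Y} |δ_{Y,e}(i)|` is at most `dinf`. -/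
def LinftyIndep {α : Type*} [Fintype α] [DecidableEq α]
    (μ : Finset α → ℝ) (dinf : ℝ) : Prop :=
  ∀ A0 A1 : Finset α, Disjoint A0 A1 → redNorm μ A0 A1 ≠ 0 →
    ∀ e : α, intensity (reduced μ A0 A1) e ≠ 0 →
      ∑ i ∈ Finset.univ.filter (fun i => intensity (reduced μ A0 A1) i ≠ 0),
        |deltaPP (reduced μ A0 A1) e i| ≤ dinf

/-- Matrix absolute value `|A| = (A*A)^{1/2}`. -/
noncomputable def matrixAbs {d : ℕ} (A : Matrix (Fin d) (Fin d) ℂ) :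
    Matrix (Fin d) (Fin d) ℂ :=
  (Matrix.posSemidef_conjTranspose_mul_self A).1.eigenvectorUnitary.1 *
    diagonal ((↑) ∘ (√·) ∘ (Matrix.posSemidef_conjTranspose_mul_self A).1.eigenvalues) *
    (star (Matrix.posSemidef_conjTranspose_mul_self A).1.eigenvectorUnitary : Matrix (Fin d) (Fin d) ℂ)

namespace MIBAux

/-! ### Matrix helpers -/

variable {d : ℕ}

local notation "M" => Matrix (Fin d) (Fin d) ℂ

lemma coe_smul_eq (r : ℝ) (A : M) : (r : ℂ) • A = r • A := by
  ext i j; simp [Matrix.smul_apply, Complex.real_smul]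

lemma herm_smul_real {A : M} (hA : A.IsHermitian) (c : ℝ) : (c • A).IsHermitian := by
  unfold Matrix.IsHermitian
  rw [Matrix.conjTranspose_smul, hA.eq]
  norm_num

lemma psd_smul_real {A : M} (hA : A.PosSemidef) {c : ℝ} (hc : 0 ≤ c) :
    (c • A).PosSemidef := by
  exact hA.smul hc

lemma psd_sum {ι : Type*} (s : Finset ι) (f : ι → M)
    (h : ∀ i ∈ s, (f i).PosSemidef) : (∑ i ∈ s, f i).PosSemidef := by
  classical
  induction s using Finset.induction_on with
  | empty => simpa using Matrix.PosSemidef.zero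
  | insert _ _ hx ih =>
    rw [Finset.sum_insert hx]
    exact ((h _ (Finset.mem_insert_self _ _)).add
      (ih fun i hi => h i (Finset.mem_insert_of_mem hi)))

lemma psd_sub_trans {A B C : M} (h1 : (B - A).PosSemidef) (h2 : (C - B).PosSemidef) :
    (C - A).PosSemidef := by
  have h := h1.add h2
  rwa [show B - A + (C - B) = C - A by abel] at h

lemma psd_sub_sum {ι : Type*} (s : Finset ι) (f g : ι → M)
    (h : ∀ i ∈ s, (g i - f i).PosSemidef) :
    ((∑ i ∈ s, g i) - ∑ i ∈ s, f i).PosSemidef := by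
  rw [← Finset.sum_sub_distrib]
  exact psd_sum s _ h

/-- `|c| • (A² + B²) - c • (AB + BA)` is PSD for Hermitian `A B`. -/
lemma pair_psd {A B : M} (hA : A.IsHermitian) (hB : B.IsHermitian) (c : ℝ) :
    (|c| • (A * A + B * B) - c • (A * B + B * A)).PosSemidef := by
  rcases le_or_gt 0 c with hc | hc
  · rw [abs_of_nonneg hc, ← smul_sub]
    refine psd_smul_real ?_ hc
    have h : A * A + B * B - (A * B + B * A) = (A - B)ᴴ * (A - B) := by
      rw [Matrix.conjTranspose_sub, hA.eq, hB.eq]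
      noncomm_ring
    rw [h]; exact Matrix.posSemidef_conjTranspose_mul_self _
  · rw [abs_of_neg hc,
      show (-c) • (A*A + B*B) - c • (A*B + B*A) = (-c) • ((A*A + B*B) + (A*B + B*A)) from by
        simp only [smul_add, neg_smul]; abel]
    refine psd_smul_real ?_ (by linarith)
    have h : A * A + B * B + (A * B + B * A) = (A + B)ᴴ * (A + B) := by
      rw [Matrix.conjTranspose_add, hA.eq, hB.eq]
      noncomm_ring
    rw [h]; exact Matrix.posSemidef_conjTranspose_mul_self _

/-- Cauchy-Schwarz-type bound `(∑ cᵢ Aᵢ)² ⪯ t • ∑ |cᵢ| Aᵢ²` when `∑ |cᵢ| ≤ t`. -/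
lemma cs_psd {ι : Type*} (s : Finset ι) (c : ι → ℝ) (A : ι → M)
    (hA : ∀ i, (A i).IsHermitian) {t : ℝ} (ht : ∑ i ∈ s, |c i| ≤ t) :
    (t • (∑ i ∈ s, |c i| • (A i * A i))
      - (∑ i ∈ s, c i • A i) * (∑ j ∈ s, c j • A j)).PosSemidef := by
  classical
  set u : ℝ := ∑ i ∈ s, |c i| with hu
  set Q : M := ∑ i ∈ s, |c i| • (A i * A i) with hQdef
  have hQ : Q.PosSemidef := by
    refine psd_sum _ _ fun i _ => psd_smul_real ?_ (abs_nonneg _)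
    have h : A i * A i = (A i)ᴴ * A i := by rw [(hA i).eq]
    rw [h]; exact Matrix.posSemidef_conjTranspose_mul_self _
  have hSS : (∑ i ∈ s, c i • A i) * (∑ j ∈ s, c j • A j)
      = ∑ i ∈ s, ∑ j ∈ s, (c i * c j) • (A i * A j) := by
    rw [Finset.sum_mul_sum]
    exact Finset.sum_congr rfl fun i _ => Finset.sum_congr rfl fun j _ =>
      smul_mul_smul_comm (c i) (A i) (c j) (A j)
  have hmain : ((∑ i ∈ s, ∑ j ∈ s, (|c i| * |c j|) • (A i * A i + A j * A j))
      - ∑ i ∈ s, ∑ j ∈ s, (c i * c j) • (A i * A j + A j * A i)).PosSemidef := by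
    refine psd_sub_sum _ _ _ fun i _ => psd_sub_sum _ _ _ fun j _ => ?_
    have h := pair_psd (hA i) (hA j) (c i * c j)
    rwa [abs_mul] at h
  have hid1 : (∑ i ∈ s, ∑ j ∈ s, (c i * c j) • (A i * A j + A j * A i))
      = (∑ i ∈ s, ∑ j ∈ s, (c i * c j) • (A i * A j))
        + ∑ i ∈ s, ∑ j ∈ s, (c i * c j) • (A i * A j) := by
    simp only [smul_add, Finset.sum_add_distrib]
    congr 1
    rw [Finset.sum_comm]
    exact Finset.sum_congr rfl fun j _ => Finset.sum_congr rfl fun i _ => by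
      rw [mul_comm]
  have hid2 : (∑ i ∈ s, ∑ j ∈ s, (|c i| * |c j|) • (A i * A i + A j * A j))
      = u • Q + u • Q := by
    simp only [smul_add, Finset.sum_add_distrib]
    congr 1
    · rw [Finset.smul_sum]
      refine Finset.sum_congr rfl fun i _ => ?_
      rw [← Finset.sum_smul, ← Finset.mul_sum, smul_smul, mul_comm u]
    · rw [Finset.sum_comm, Finset.smul_sum]
      refine Finset.sum_congr rfl fun i _ => ?_
      rw [← Finset.sum_smul, ← Finset.sum_mul, smul_smul]
  have hhalf : (u • Q - (∑ i ∈ s, c i • A i) * (∑ j ∈ s, c j • A j)).PosSemidef := by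
    have h2 : (u • Q + u • Q - ((∑ i ∈ s, ∑ j ∈ s, (c i * c j) • (A i * A j))
        + ∑ i ∈ s, ∑ j ∈ s, (c i * c j) • (A i * A j))).PosSemidef := by
      rw [← hid1, ← hid2]; exact hmain
    have h3 := psd_smul_real h2 (by norm_num : (0:ℝ) ≤ 1/2)
    rw [hSS]
    convert h3 using 1
    rw [smul_sub]
    congr 1 <;> · rw [smul_add]; module
  have h3 : (t • Q - u • Q).PosSemidef := by
    rw [← sub_smul]
    exact psd_smul_real hQ (by linarith)
  have h4 := h3.add hhalf
  rwa [show t • Q - u • Q + (u • Q - (∑ i ∈ s, c i • A i) * (∑ j ∈ s, c j • A j))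
      = t • Q - (∑ i ∈ s, c i • A i) * (∑ j ∈ s, c j • A j) by abel] at h4

open scoped MatrixOrder in
/-- `r • Y - Y*Y` is PSD when `0 ⪯ Y ⪯ r•1`. -/
lemma sq_le_r_smul {Y : M} {r : ℝ} (hY : Y.PosSemidef)
    (hYr : ((r:ℝ) • (1 : M) - Y).PosSemidef) : ((r:ℝ) • Y - Y * Y).PosSemidef := by
  obtain ⟨S, hSm⟩ : ∃ S : M, Sᴴ = S ∧ S * S = Y :=
    ⟨CFC.sqrt Y, (Matrix.nonneg_iff_posSemidef.mp (CFC.sqrt_nonneg Y)).1,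
      CFC.sqrt_mul_sqrt_self Y (Matrix.nonneg_iff_posSemidef.mpr hY)⟩
  obtain ⟨hSh, hSm⟩ := hSm
  have key : Sᴴ * ((r:ℝ) • (1 : M) - Y) * S = (r:ℝ) • Y - Y * Y := by
    rw [hSh, Matrix.mul_sub, Matrix.sub_mul]
    congr 1
    · rw [mul_smul_comm, Matrix.mul_one, smul_mul_assoc, hSm]
    · rw [← hSm]
      noncomm_ring
  rw [← key]
  exact hYr.conjTranspose_mul_mul_same _

/-- `c • Y ⪯ (|c| * r) • 1` when `0 ⪯ Y ⪯ r•1`. -/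
lemma smul_le_abs_r {Y : M} {r : ℝ} (hY : Y.PosSemidef)
    (hYr : ((r:ℝ) • (1 : M) - Y).PosSemidef) (c : ℝ) :
    ((|c| * r) • (1 : M) - c • Y).PosSemidef := by
  rcases le_or_gt 0 c with hc | hc
  · rw [abs_of_nonneg hc, show ((c * r) • (1:M) - c • Y) = c • ((r:ℝ) • 1 - Y) by
      rw [smul_sub, smul_smul]]
    exact psd_smul_real hYr hc
  · rw [abs_of_neg hc, show ((-c * r) • (1:M) - c • Y) = (-c) • ((r:ℝ) • (1:M)) + (-c) • Y by
      simp only [neg_smul, smul_smul]; abel]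
    have h1 : ((r:ℝ) • (1:M)).PosSemidef := by
      have h := hYr.add hY
      rwa [sub_add_cancel] at h
    exact ((psd_smul_real h1 (by linarith)).add (psd_smul_real hY (by linarith)))

lemma smul_one_diag (c : ℝ) : (c • (1:M)) = Matrix.diagonal (fun _ => (c:ℂ)) := by
  ext i j
  by_cases h : i = j <;>
    simp [Matrix.smul_apply, Matrix.one_apply, Matrix.diagonal, h, Complex.real_smul]

open scoped MatrixOrder in
/-- If `-c•1 ⪯ Z ⪯ c•1` for a Hermitian `Z`, then `|Z| ⪯ c•1`. -/
lemma abs_le_of_bounds {Z : M} (hZ : Z.IsHermitian) {c : ℝ}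
    (h1 : (c • (1:M) - Z).PosSemidef) (h2 : (c • (1:M) + Z).PosSemidef) :
    (c • (1:M) - matrixAbs Z).PosSemidef := by
  set U : M := ↑(hZ.eigenvectorUnitary) with hUdef
  set lam := hZ.eigenvalues with hlam
  have hUU : U * star U = 1 := (Matrix.mem_unitaryGroup_iff).mp hZ.eigenvectorUnitary.2
  have hUU' : star U * U = 1 := (Matrix.mem_unitaryGroup_iff').mp hZ.eigenvectorUnitary.2
  have hdiag : star U * Z * U = Matrix.diagonal (fun i => (lam i : ℂ)) := by
    have h := hZ.conjStarAlgAut_star_eigenvectorUnitary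
    rw [Unitary.conjStarAlgAut_apply] at h
    simpa [Function.comp_def] using h
  have hconj : ∀ (f : Fin d → ℂ), U * Matrix.diagonal f * star U * (U * Matrix.diagonal f * star U)
      = U * Matrix.diagonal (fun i => f i * f i) * star U := by
    intro f
    rw [← Matrix.diagonal_mul_diagonal]
    calc U * Matrix.diagonal f * star U * (U * Matrix.diagonal f * star U)
        = U * Matrix.diagonal f * (star U * U) * Matrix.diagonal f * star U := by
          simp only [Matrix.mul_assoc]
      _ = U * (Matrix.diagonal f * Matrix.diagonal f) * star U := by
          rw [hUU']; simp only [Matrix.mul_one, Matrix.mul_assoc]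
  have hspec : Z = U * Matrix.diagonal (fun i => (lam i : ℂ)) * star U := by
    rw [← hdiag]
    calc Z = (U * star U) * Z * (U * star U) := by rw [hUU, Matrix.one_mul, Matrix.mul_one]
      _ = U * (star U * Z * U) * star U := by simp only [Matrix.mul_assoc]
  have hb : ∀ i, |lam i| ≤ c := by
    intro i
    have hc1 : (star U * (c • (1:M) - Z) * U).PosSemidef := by
      have h := h1.conjTranspose_mul_mul_same U
      rwa [← Matrix.star_eq_conjTranspose] at h
    have hc2 : (star U * (c • (1:M) + Z) * U).PosSemidef := by
      have h := h2.conjTranspose_mul_mul_same U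
      rwa [← Matrix.star_eq_conjTranspose] at h
    have e1 : star U * (c • (1:M) - Z) * U
        = Matrix.diagonal (fun i => (c:ℂ) - lam i) := by
      rw [Matrix.mul_sub, Matrix.sub_mul, mul_smul_comm, smul_mul_assoc, Matrix.mul_one,
        hUU', hdiag, smul_one_diag, Matrix.diagonal_sub]
    have e2 : star U * (c • (1:M) + Z) * U
        = Matrix.diagonal (fun i => (c:ℂ) + lam i) := by
      rw [Matrix.mul_add, Matrix.add_mul, mul_smul_comm, smul_mul_assoc, Matrix.mul_one,
        hUU', hdiag, smul_one_diag, Matrix.diagonal_add]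
    rw [e1] at hc1; rw [e2] at hc2
    have p1 := (Matrix.posSemidef_diagonal_iff.mp hc1) i
    have p2 := (Matrix.posSemidef_diagonal_iff.mp hc2) i
    rw [show (c:ℂ) - lam i = ((c - lam i : ℝ) : ℂ) by push_cast; ring,
      Complex.zero_le_real] at p1
    rw [show (c:ℂ) + lam i = ((c + lam i : ℝ) : ℂ) by push_cast; ring,
      Complex.zero_le_real] at p2
    rw [abs_le]; constructor <;> linarith
  set W : M := U * Matrix.diagonal (fun i => ((|lam i| : ℝ) : ℂ)) * star U with hWdef
  have hWpsd : W.PosSemidef := by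
    have hd : (Matrix.diagonal (fun i => ((|lam i| : ℝ) : ℂ))).PosSemidef :=
      Matrix.posSemidef_diagonal_iff.mpr fun i => Complex.zero_le_real.mpr (abs_nonneg _)
    have h := hd.mul_mul_conjTranspose_same U
    rwa [← Matrix.star_eq_conjTranspose] at h
  have hW2 : W ^ 2 = Zᴴ * Z := by
    rw [hZ.eq, pow_two, hWdef, hconj]
    conv_rhs => rw [hspec, hconj]
    have hfun : (fun i => ((|lam i| : ℝ) : ℂ) * ((|lam i| : ℝ) : ℂ))
        = fun i => ((lam i : ℝ) : ℂ) * ((lam i : ℝ) : ℂ) := by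
      funext i
      rw [← Complex.ofReal_mul, ← Complex.ofReal_mul, abs_mul_abs_self]
    rw [hfun]
  have hWabs : matrixAbs Z = W := by
    have h1 : matrixAbs Z = CFC.sqrt (Zᴴ * Z) := by
      rw [CFC.sqrt_eq_real_sqrt _ (Matrix.nonneg_iff_posSemidef.mpr
          (Matrix.posSemidef_conjTranspose_mul_self Z)), cfcₙ_eq_cfc (hf0 := Real.sqrt_zero),
        (Matrix.posSemidef_conjTranspose_mul_self Z).1.cfc_eq, IsHermitian.cfc,
        Unitary.conjStarAlgAut_apply]
      rfl
    rw [h1]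
    exact CFC.sqrt_unique (by rw [← pow_two, hW2]) (Matrix.nonneg_iff_posSemidef.mpr hWpsd)
  rw [hWabs]
  have efin : c • (1:M) - W = U * Matrix.diagonal (fun i => ((c - |lam i| : ℝ) : ℂ)) * star U := by
    have h : (fun i => ((c - |lam i| : ℝ) : ℂ)) = fun i => (c : ℂ) - ((|lam i| : ℝ) : ℂ) := by
      funext i; push_cast; ring
    rw [h, ← Matrix.diagonal_sub, ← smul_one_diag, Matrix.mul_sub, Matrix.sub_mul,
      mul_smul_comm, smul_mul_assoc, Matrix.mul_one, hUU]
  rw [efin]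
  have hd : (Matrix.diagonal (fun i => ((c - |lam i| : ℝ) : ℂ))).PosSemidef :=
    Matrix.posSemidef_diagonal_iff.mpr fun i =>
      Complex.zero_le_real.mpr (by linarith [hb i])
  have h := hd.mul_mul_conjTranspose_same U
  rwa [← Matrix.star_eq_conjTranspose] at h

/-! ### Point process helpers -/

variable {α : Type*} [Fintype α] [DecidableEq α]

lemma intensity_nonneg (μ : Finset α → ℝ) (hμ0 : ∀ F, 0 ≤ μ F) (i : α) :
    0 ≤ intensity μ i :=
  Finset.sum_nonneg fun F _ => hμ0 F

lemma mu_eq_zero {μ : Finset α → ℝ} (hμ0 : ∀ F, 0 ≤ μ F) {i : α}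
    (hi : intensity μ i = 0) : ∀ F, i ∈ F → μ F = 0 := by
  intro F hF
  have h := (Finset.sum_eq_zero_iff_of_nonneg (fun F _ => hμ0 F)).mp hi
  exact h F (by simp [Finset.mem_filter, hF])

lemma expand {N : Type*} [AddCommGroup N] [Module ℝ N] (ν : Finset α → ℝ) (Y : α → N) :
    ∑ B : Finset α, ν B • ∑ i ∈ B, Y i = ∑ i : α, intensity ν i • Y i := by
  calc ∑ B : Finset α, ν B • ∑ i ∈ B, Y i
      = ∑ B : Finset α, ∑ i : α, if i ∈ B then ν B • Y i else 0 := by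
        refine Finset.sum_congr rfl fun B _ => ?_
        rw [Finset.smul_sum, ← Finset.sum_filter]
        congr 1
        rw [Finset.filter_mem_eq_inter, Finset.univ_inter]
    _ = ∑ i : α, ∑ B : Finset α, if i ∈ B then ν B • Y i else 0 := Finset.sum_comm
    _ = ∑ i : α, intensity ν i • Y i := by
        refine Finset.sum_congr rfl fun i _ => ?_
        rw [← Finset.sum_filter, intensity, ← Finset.sum_smul]

lemma redNorm_singleton (μ : Finset α → ℝ) (f : α) :
    redNorm μ ∅ {f} = intensity μ f := by
  rw [redNorm, intensity]
  refine Finset.sum_nbij' (fun B => insert f B) (fun F => F.erase f) ?_ ?_ ?_ ?_ ?_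
  · intro B hB
    simp [Finset.mem_filter]
  · intro F hF
    simp only [Finset.mem_filter, Finset.mem_univ, true_and, Finset.empty_union,
      Finset.disjoint_singleton_right] at *
    exact Finset.notMem_erase f F
  · intro B hB
    simp only [Finset.mem_filter, Finset.mem_univ, true_and, Finset.empty_union,
      Finset.disjoint_singleton_right] at hB
    exact Finset.erase_insert hB
  · intro F hF
    simp only [Finset.mem_filter, Finset.mem_univ, true_and] at hF
    exact Finset.insert_erase hF
  · intro B hB
    simp only [Finset.insert_eq]

lemma intensity_reduced_self (μ : Finset α → ℝ) (f : α) :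
    intensity (reduced μ ∅ {f}) f = 0 := by
  rw [intensity]
  refine Finset.sum_eq_zero fun B hB => ?_
  simp only [Finset.mem_filter, Finset.mem_univ, true_and] at hB
  rw [reduced, if_neg]
  simp only [Finset.empty_union, Finset.disjoint_singleton_right]
  exact fun h => h hB

lemma intensity_reduced_zero {μ : Finset α → ℝ} (hμ0 : ∀ F, 0 ≤ μ F) (f : α) {i : α}
    (hi : intensity μ i = 0) : intensity (reduced μ ∅ {f}) i = 0 := by
  rw [intensity]
  refine Finset.sum_eq_zero fun B hB => ?_
  simp only [Finset.mem_filter, Finset.mem_univ, true_and] at hB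
  rw [reduced]
  split
  · rw [mu_eq_zero hμ0 hi _ (Finset.mem_union_right _ hB), zero_div]
  · rfl

lemma deltaPP_zero {μ : Finset α → ℝ} (hμ0 : ∀ F, 0 ≤ μ F) {f i : α}
    (hf : intensity μ f ≠ 0) (hi : intensity μ i = 0) : deltaPP μ f i = 0 := by
  have hif : i ≠ f := fun h => hf (h ▸ hi)
  rw [deltaPP, if_neg hif, intensity_reduced_zero hμ0 f hi, hi, sub_zero]

lemma sum_reduced {μ : Finset α → ℝ} (f : α) (hf : intensity μ f ≠ 0) :
    ∑ B : Finset α, reduced μ ∅ {f} B = 1 := by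
  have hN : redNorm μ ∅ {f} = intensity μ f := redNorm_singleton μ f
  calc ∑ B : Finset α, reduced μ ∅ {f} B
      = ∑ B ∈ Finset.univ.filter (fun B => Disjoint B (∅ ∪ {f})),
          μ ({f} ∪ B) / redNorm μ ∅ {f} := by
        simp only [reduced]
        rw [← Finset.sum_filter]
    _ = redNorm μ ∅ {f} / redNorm μ ∅ {f} := by rw [← Finset.sum_div]; rfl
    _ = 1 := div_self (hN ▸ hf)

lemma pair_intensity {μ : Finset α → ℝ} {f i : α} (hif : i ≠ f)
    (hf : intensity μ f ≠ 0) :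
    intensity μ f * intensity (reduced μ ∅ {f}) i
      = ∑ F ∈ Finset.univ.filter (fun F => f ∈ F ∧ i ∈ F), μ F := by
  have hN : redNorm μ ∅ {f} = intensity μ f := redNorm_singleton μ f
  calc intensity μ f * intensity (reduced μ ∅ {f}) i
      = ∑ B ∈ Finset.univ.filter (fun B => i ∈ B),
          intensity μ f * reduced μ ∅ {f} B := by
        rw [show intensity (reduced μ ∅ {f}) i
          = ∑ B ∈ Finset.univ.filter (fun B => i ∈ B), reduced μ ∅ {f} B from rfl,
          Finset.mul_sum]
    _ = ∑ B ∈ Finset.univ.filter (fun B => i ∈ B),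
          (if Disjoint B (∅ ∪ {f}) then μ ({f} ∪ B) else 0) := by
        refine Finset.sum_congr rfl fun B _ => ?_
        rw [reduced, mul_ite, mul_zero]
        congr 1
        rw [hN, mul_comm, div_mul_cancel₀ _ hf]
    _ = ∑ B ∈ (Finset.univ.filter (fun B => i ∈ B)).filter
          (fun B => Disjoint B (∅ ∪ {f})), μ ({f} ∪ B) := (Finset.sum_filter _ _).symm
    _ = ∑ F ∈ Finset.univ.filter (fun F => f ∈ F ∧ i ∈ F), μ F := by
        rw [Finset.filter_filter]
        refine Finset.sum_nbij' (fun B => insert f B) (fun F => F.erase f) ?_ ?_ ?_ ?_ ?_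
        · intro B hB
          simp only [Finset.mem_filter, Finset.mem_univ, true_and, Finset.empty_union,
            Finset.disjoint_singleton_right] at *
          exact ⟨Finset.mem_insert_self f B, Finset.mem_insert_of_mem hB.1⟩
        · intro F hF
          simp only [Finset.mem_filter, Finset.mem_univ, true_and, Finset.empty_union,
            Finset.disjoint_singleton_right] at *
          exact ⟨Finset.mem_erase.mpr ⟨hif, hF.2⟩, Finset.notMem_erase f F⟩
        · intro B hB
          simp only [Finset.mem_filter, Finset.mem_univ, true_and, Finset.empty_union,
            Finset.disjoint_singleton_right] at hB
          exact Finset.erase_insert hB.2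
        · intro F hF
          simp only [Finset.mem_filter, Finset.mem_univ, true_and] at hF
          exact Finset.insert_erase hF.1
        · intro B hB
          simp only [Finset.insert_eq]

lemma pp_symmetry {μ : Finset α → ℝ} {f i : α}
    (hf : intensity μ f ≠ 0) (hi : intensity μ i ≠ 0) :
    intensity μ f * deltaPP μ f i = intensity μ i * deltaPP μ i f := by
  by_cases hif : i = f
  · subst hif; rfl
  · rw [deltaPP, deltaPP, if_neg hif, if_neg (Ne.symm hif), mul_sub, mul_sub,
      pair_intensity hif hf, pair_intensity (Ne.symm hif) hi]
    congr 1
    · congr 1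
      ext F
      simp only [Finset.mem_filter, Finset.mem_univ, true_and]
      tauto
    · exact mul_comm _ _

lemma redNorm_empty_empty {μ : Finset α → ℝ} (hμ1 : ∑ F, μ F = 1) :
    redNorm μ ∅ ∅ = 1 := by
  rw [redNorm]
  simpa using hμ1

lemma reduced_empty_empty {μ : Finset α → ℝ} (hμ1 : ∑ F, μ F = 1) :
    reduced μ ∅ ∅ = μ := by
  have hN : redNorm μ ∅ ∅ = 1 := redNorm_empty_empty hμ1
  funext B
  rw [reduced, hN, if_pos (by simp), div_one, Finset.empty_union]

lemma abs_sum_le {μ : Finset α → ℝ} (hμ0 : ∀ F, 0 ≤ μ F) (hμ1 : ∑ F, μ F = 1)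
    {dinf : ℝ} (hind : LinftyIndep μ dinf)
    {f : α} (hf : intensity μ f ≠ 0) :
    ∑ i : α, |deltaPP μ f i| ≤ dinf := by
  have hred : reduced μ ∅ ∅ = μ := reduced_empty_empty hμ1
  have hN : redNorm μ ∅ ∅ ≠ 0 := by
    rw [redNorm_empty_empty hμ1]; norm_num
  have h := hind ∅ ∅ (Finset.disjoint_empty_left _) hN f (by rwa [hred])
  rw [hred] at h
  refine le_trans (le_of_eq ?_) h
  rw [← Finset.sum_filter_add_sum_filter_not Finset.univ
    (fun i => intensity μ i ≠ 0) (fun i => |deltaPP μ f i|)]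
  have hz : ∑ i ∈ Finset.univ.filter (fun i => ¬ intensity μ i ≠ 0), |deltaPP μ f i| = 0 := by
    refine Finset.sum_eq_zero fun i hi => ?_
    simp only [Finset.mem_filter, Finset.mem_univ, true_and, not_not] at hi
    rw [deltaPP_zero hμ0 hf hi, abs_zero]
  rw [hz, add_zero]

end MIBAux

open MIBAux in
/-- **Martingale increment bounds.** -/
theorem martingale_increment_bounds
    {m d : ℕ} (μ : Finset (Fin m) → ℝ) (hμ0 : ∀ F, 0 ≤ μ F) (hμ1 : ∑ F, μ F = 1)
    (k : ℕ) (hk : 1 ≤ k) (hhom : IsHomogeneous μ k)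
    (dinf : ℝ) (hind : LinftyIndep μ dinf)
    (Y : Fin m → Matrix (Fin d) (Fin d) ℂ) (r : ℝ) (hr : 0 < r)
    (hY0 : ∀ i, (Y i).PosSemidef)
    (hYr : ∀ i, ((r : ℂ) • (1 : Matrix (Fin d) (Fin d) ℂ) - Y i).PosSemidef)
    (e : Fin m) (he : intensity μ e ≠ 0)
    (Z : Fin m → Matrix (Fin d) (Fin d) ℂ)
    (hZ : ∀ f, intensity μ f ≠ 0 →
      Z f = (∑ B : Finset (Fin m), reduced μ ∅ {f} B • (Y f + ∑ i ∈ B, Y i))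
              - ∑ F : Finset (Fin m), μ F • ∑ i ∈ F, Y i) :
    ((r * dinf) • (1 : Matrix (Fin d) (Fin d) ℂ) - matrixAbs (Z e)).PosSemidef ∧
    ((r * dinf ^ 2) • (∑ f : Fin m, (intensity μ f / k) • Y f)
        - ∑ f : Fin m, (intensity μ f / k) • (Z f * Z f)).PosSemidef := by
  have hdelta_sum : ∀ f : Fin m, intensity μ f ≠ 0 → ∑ i : Fin m, |deltaPP μ f i| ≤ dinf :=
    fun f hf => abs_sum_le hμ0 hμ1 hind hf
  have hdinf0 : 0 ≤ dinf :=
    le_trans (Finset.sum_nonneg fun i _ => abs_nonneg _) (hdelta_sum e he)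
  have hYr' : ∀ i, ((r : ℝ) • (1 : Matrix (Fin d) (Fin d) ℂ) - Y i).PosSemidef := by
    intro i
    rw [← coe_smul_eq]
    exact hYr i
  have hk0 : (0:ℝ) < (k:ℝ) := by exact_mod_cast hk
  -- the increments as linear combinations
  have hZf : ∀ f, intensity μ f ≠ 0 → Z f = ∑ i : Fin m, deltaPP μ f i • Y i := by
    intro f hf
    rw [hZ f hf]
    have h1 : ∑ B : Finset (Fin m), reduced μ ∅ {f} B • (Y f + ∑ i ∈ B, Y i)
        = Y f + ∑ i : Fin m, intensity (reduced μ ∅ {f}) i • Y i := by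
      simp only [smul_add]
      rw [Finset.sum_add_distrib, ← Finset.sum_smul, sum_reduced f hf, one_smul, expand]
    rw [h1, expand]
    have h2 : ∀ i, deltaPP μ f i • Y i
        = (intensity (reduced μ ∅ {f}) i - intensity μ i) • Y i
          + (if i = f then Y i else 0) := by
      intro i
      by_cases hif : i = f
      · subst hif
        rw [deltaPP, if_pos rfl, if_pos rfl, intensity_reduced_self, zero_sub,
          sub_smul, one_smul, neg_smul]
        abel
      · rw [deltaPP, if_neg hif, if_neg hif, add_zero]
    rw [Finset.sum_congr rfl (fun i _ => h2 i), Finset.sum_add_distrib]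
    simp only [sub_smul]
    rw [Finset.sum_sub_distrib, Finset.sum_ite_eq' Finset.univ f (fun i => Y i),
      if_pos (Finset.mem_univ f)]
    abel
  have hZherm : ∀ f, intensity μ f ≠ 0 → (Z f).IsHermitian := by
    intro f hf
    rw [hZf f hf]
    have : ∀ i ∈ Finset.univ, (deltaPP μ f i • Y i).IsHermitian :=
      fun i _ => herm_smul_real (hY0 i).1 _
    unfold Matrix.IsHermitian
    rw [Matrix.conjTranspose_sum]
    exact Finset.sum_congr rfl fun i hi => this i hi
  -- uniform bound on combinations
  have bound : ∀ (c : Fin m → ℝ), (∑ i : Fin m, |c i|) ≤ dinf →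
      ((r * dinf) • (1 : Matrix (Fin d) (Fin d) ℂ) - ∑ i : Fin m, c i • Y i).PosSemidef := by
    intro c hc
    have h1 : ((∑ i : Fin m, (|c i| * r) • (1 : Matrix (Fin d) (Fin d) ℂ))
        - ∑ i : Fin m, c i • Y i).PosSemidef :=
      psd_sub_sum _ _ _ fun i _ => smul_le_abs_r (hY0 i) (hYr' i) (c i)
    have h2 : (∑ i : Fin m, (|c i| * r) • (1 : Matrix (Fin d) (Fin d) ℂ))
        = ((∑ i : Fin m, |c i|) * r) • (1 : Matrix (Fin d) (Fin d) ℂ) := by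
      rw [← Finset.sum_smul, Finset.sum_mul]
    rw [h2] at h1
    have h3 : ((r * dinf) • (1 : Matrix (Fin d) (Fin d) ℂ)
        - ((∑ i : Fin m, |c i|) * r) • (1 : Matrix (Fin d) (Fin d) ℂ)).PosSemidef := by
      rw [← sub_smul]
      refine psd_smul_real Matrix.PosSemidef.one ?_
      nlinarith
    exact psd_sub_trans h1 h3
  constructor
  · -- Part (i)
    refine abs_le_of_bounds (hZherm e he) ?_ ?_
    · rw [hZf e he]
      exact bound _ (hdelta_sum e he)
    · have hneg : (-(Z e)) = ∑ i : Fin m, (-(deltaPP μ e i)) • Y i := by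
        rw [hZf e he]
        simp [neg_smul, Finset.sum_neg_distrib]
      have h := bound (fun i => -(deltaPP μ e i)) (by simpa using hdelta_sum e he)
      rw [← hneg, sub_neg_eq_add] at h
      exact h
  · -- Part (ii)
    set ν : Fin m → ℝ := fun f => intensity μ f / (k:ℝ) with hν
    have hν0 : ∀ f, 0 ≤ ν f := fun f => div_nonneg (intensity_nonneg μ hμ0 f) hk0.le
    have hνzero : ∀ f, intensity μ f = 0 → ν f = 0 := by
      intro f hf; rw [hν]; simp [hf]
    set Q : Fin m → Matrix (Fin d) (Fin d) ℂ :=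
      fun f => ∑ i : Fin m, |deltaPP μ f i| • Y i with hQ
    -- Step 1: per-f bound
    have step1 : ∀ f, ((ν f * dinf * r) • Q f - ν f • (Z f * Z f)).PosSemidef := by
      intro f
      by_cases hf : intensity μ f = 0
      · rw [hνzero f hf]
        simp only [zero_mul, zero_smul, sub_zero]
        exact Matrix.PosSemidef.zero
      · have h1 := cs_psd Finset.univ (deltaPP μ f) Y (fun i => (hY0 i).1) (hdelta_sum f hf)
        rw [← hZf f hf] at h1
        have h2 : ((dinf * r) • Q f
            - dinf • ∑ i : Fin m, |deltaPP μ f i| • (Y i * Y i)).PosSemidef := by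
          have hq : (dinf * r) • Q f = dinf • ∑ i : Fin m, |deltaPP μ f i| • ((r:ℝ) • Y i) := by
            rw [hQ, Finset.smul_sum, Finset.smul_sum]
            refine Finset.sum_congr rfl fun i _ => ?_
            simp only [smul_smul]
            congr 1
            ring
          rw [hq, ← smul_sub]
          refine psd_smul_real ?_ hdinf0
          refine psd_sub_sum _ _ _ fun i _ => ?_
          rw [← smul_sub]
          exact psd_smul_real (sq_le_r_smul (hY0 i) (hYr' i)) (abs_nonneg _)
        have h3 := psd_sub_trans h1 h2
        have h4 := psd_smul_real h3 (hν0 f)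
        rw [smul_sub, smul_smul, ← mul_assoc] at h4
        exact h4
    have step2 : ((∑ f : Fin m, (ν f * dinf * r) • Q f)
        - ∑ f : Fin m, ν f • (Z f * Z f)).PosSemidef :=
      psd_sub_sum _ _ _ fun f _ => step1 f
    -- Step 3: rewrite the upper bound as a combination of the `Y i`
    have step3 : (∑ f : Fin m, (ν f * dinf * r) • Q f)
        = ∑ i : Fin m, ((r * dinf) * ∑ f : Fin m, ν f * |deltaPP μ f i|) • Y i := by
      calc ∑ f : Fin m, (ν f * dinf * r) • Q f
          = ∑ f : Fin m, ∑ i : Fin m, (ν f * dinf * r * |deltaPP μ f i|) • Y i := by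
            refine Finset.sum_congr rfl fun f _ => ?_
            rw [hQ, Finset.smul_sum]
            exact Finset.sum_congr rfl fun i _ => by rw [smul_smul]
        _ = ∑ i : Fin m, ∑ f : Fin m, (ν f * dinf * r * |deltaPP μ f i|) • Y i :=
            Finset.sum_comm
        _ = ∑ i : Fin m, ((r * dinf) * ∑ f : Fin m, ν f * |deltaPP μ f i|) • Y i := by
            refine Finset.sum_congr rfl fun i _ => ?_
            rw [← Finset.sum_smul, Finset.mul_sum]
            congr 1
            exact Finset.sum_congr rfl fun f _ => by ring
    -- Step 4: the key scalar inequality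
    have key : ∀ i : Fin m, ∑ f : Fin m, ν f * |deltaPP μ f i| ≤ dinf * ν i := by
      intro i
      by_cases hi : intensity μ i = 0
      · have hz : ∀ f : Fin m, ν f * |deltaPP μ f i| = 0 := by
          intro f
          by_cases hf : intensity μ f = 0
          · rw [hνzero f hf, zero_mul]
          · rw [deltaPP_zero hμ0 hf hi, abs_zero, mul_zero]
        rw [Finset.sum_eq_zero fun f _ => hz f, hνzero i hi, mul_zero]
      · have hterm : ∀ f : Fin m, ν f * |deltaPP μ f i| = ν i * |deltaPP μ i f| := by
          intro f
          by_cases hf : intensity μ f = 0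
          · rw [hνzero f hf, zero_mul, deltaPP_zero hμ0 hi hf, abs_zero, mul_zero]
          · have hs := congrArg abs (pp_symmetry hf hi)
            rw [abs_mul, abs_mul, abs_of_nonneg (intensity_nonneg μ hμ0 f),
              abs_of_nonneg (intensity_nonneg μ hμ0 i)] at hs
            rw [hν]
            simp only []
            rw [div_mul_eq_mul_div, div_mul_eq_mul_div, hs]
        rw [Finset.sum_congr rfl fun f _ => hterm f, ← Finset.mul_sum, mul_comm dinf (ν i)]
        exact mul_le_mul_of_nonneg_left (hdelta_sum i hi) (hν0 i)
    have step4 : ((∑ i : Fin m, ((r * dinf) * (dinf * ν i)) • Y i)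
        - ∑ i : Fin m, ((r * dinf) * ∑ f : Fin m, ν f * |deltaPP μ f i|) • Y i).PosSemidef := by
      refine psd_sub_sum _ _ _ fun i _ => ?_
      rw [← sub_smul]
      refine psd_smul_real (hY0 i) ?_
      have h := mul_le_mul_of_nonneg_left (key i) (mul_nonneg hr.le hdinf0)
      linarith
    have step5 : (∑ i : Fin m, ((r * dinf) * (dinf * ν i)) • Y i)
        = (r * dinf ^ 2) • ∑ f : Fin m, ν f • Y f := by
      rw [Finset.smul_sum]
      refine Finset.sum_congr rfl fun i _ => ?_
      rw [smul_smul]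
      congr 1
      ring
    have final := psd_sub_trans (step3 ▸ step2) (step5 ▸ step4)
    exact final
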